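/- arXiv:1508.01858 — 2 statements merged into one kernel-verified Lean document; each statement's English description precedes it below -/
import Mathlib

section
/- For every integer n ≥ 1, the n-th Cauchy number satisfies c_n = (−1)^n Σ_{k=1}^{n} (−1)^k · binom(n+1, k+1)/binom(n+k, n) · S1(n+k, k), where S1 denotes the unsigned Stirling numbers of the first kind. -/
open scoped Classical
open PowerSeries Finset

noncomputable section

/-- The formal power series `log(1+z) = Σ_{m ≥ 1} (-1)^{m-1} z^m / m` in `ℚ⟦z⟧`. -/
def log1p : PowerSeries ℚ :=
  PowerSeries.mk fun m => if m = 0 then 0 else (-1 : ℚ) ^ (m - 1) / m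

/-- The formal power series `log(1+z)/z` in `ℚ⟦z⟧`. -/
def log1pDivZ : PowerSeries ℚ :=
  PowerSeries.mk fun n => PowerSeries.coeff (R := ℚ) (n + 1) log1p

/-- The formal power series `-log(1-t) = Σ_{m ≥ 1} t^m / m` in `ℚ⟦t⟧`. -/
def negLog1m : PowerSeries ℚ :=
  PowerSeries.mk fun m => if m = 0 then 0 else 1 / (m : ℚ)

/-- Auxiliary series `u = (-log(1-t))/t = Σ_{n≥0} t^n/(n+1)`. -/
def auxU : PowerSeries ℚ := PowerSeries.mk fun n => 1 / ((n : ℚ) + 1)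

lemma negLog1m_eq : negLog1m = X * auxU := by
  ext m
  cases m with
  | zero => simp [negLog1m]
  | succ d =>
    rw [PowerSeries.coeff_succ_X_mul]
    simp only [negLog1m, auxU, PowerSeries.coeff_mk, Nat.succ_ne_zero, if_false]
    push_cast
    ring

lemma rescale_log1pDivZ : rescale (-1 : ℚ) log1pDivZ = auxU := by
  ext m
  rw [PowerSeries.coeff_rescale]
  simp only [log1pDivZ, log1p, auxU, PowerSeries.coeff_mk, Nat.succ_ne_zero, if_false,
    Nat.add_sub_cancel]
  have h : (-1 : ℚ) ^ m * ((-1 : ℚ) ^ m / (↑(m + 1) : ℚ))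
      = ((-1 : ℚ) ^ (m + m)) / (↑(m + 1) : ℚ) := by
    rw [pow_add]; ring
  rw [h, Even.neg_one_pow ⟨m, by ring⟩]
  push_cast
  ring

/-- Proposition 2: for `n ≥ 1`,
`c_n = (-1)^n Σ_{k=1}^n (-1)^k (C(n+1, k+1) / C(n+k, n)) · S1(n+k, k)`,
where `S1` are the unsigned Stirling numbers of the first kind. -/
theorem cauchy_eq_sum_stirlingFirst
    (c : ℕ → ℚ) (S1 : ℕ → ℕ → ℚ)
    (hc : (PowerSeries.mk fun n => c n / n.factorial) * log1pDivZ = 1)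
    (hS1 : ∀ n k : ℕ,
      PowerSeries.coeff (R := ℚ) n (negLog1m ^ k) / k.factorial = S1 n k / n.factorial)
    (n : ℕ) (hn : 1 ≤ n) :
    c n = (-1 : ℚ) ^ n * ∑ k ∈ Finset.Icc 1 n,
      (-1 : ℚ) ^ k * ((Nat.choose (n + 1) (k + 1) : ℚ) / (Nat.choose (n + k) n : ℚ)) *
        S1 (n + k) k := by
  set A : PowerSeries ℚ := rescale (-1 : ℚ) (PowerSeries.mk fun m => c m / m.factorial) with hAdef
  have hA : A * auxU = 1 := by
    have h := congrArg (rescale (-1 : ℚ)) hc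
    rw [map_mul, rescale_log1pDivZ, map_one] at h
    exact h
  have hAcoeff : PowerSeries.coeff (R := ℚ) n A = (-1 : ℚ) ^ n * (c n / n.factorial) := by
    rw [hAdef, PowerSeries.coeff_rescale, PowerSeries.coeff_mk]
  -- coefficients of powers of u in terms of S1
  have hcoeffU : ∀ k : ℕ, PowerSeries.coeff (R := ℚ) n (auxU ^ k)
      = S1 (n + k) k * k.factorial / (n + k).factorial := by
    intro k
    have h1 : PowerSeries.coeff (R := ℚ) (n + k) (negLog1m ^ k) = PowerSeries.coeff (R := ℚ) n (auxU ^ k) := by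
      rw [negLog1m_eq, mul_pow, PowerSeries.coeff_X_pow_mul]
    have h2 := hS1 (n + k) k
    rw [h1] at h2
    have hk : (k.factorial : ℚ) ≠ 0 := Nat.cast_ne_zero.mpr k.factorial_ne_zero
    have hnk : ((n + k).factorial : ℚ) ≠ 0 := Nat.cast_ne_zero.mpr (n + k).factorial_ne_zero
    field_simp at h2 ⊢
    linarith [h2]
  -- (1 - u) is divisible by X
  have hXdvd : (X : PowerSeries ℚ) ∣ (1 - auxU) := by
    rw [PowerSeries.X_dvd_iff]
    simp [auxU]
  -- key vanishing
  have hkey : PowerSeries.coeff (R := ℚ) n (A * (1 - auxU) ^ (n + 1)) = 0 := by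
    obtain ⟨g, hg⟩ := pow_dvd_pow_of_dvd hXdvd (n + 1)
    have hdvd : (X : PowerSeries ℚ) ^ (n + 1) ∣ A * (1 - auxU) ^ (n + 1) :=
      ⟨g * A, by rw [hg]; ring⟩
    exact PowerSeries.X_pow_dvd_iff.mp hdvd n (Nat.lt_succ_self n)
  -- binomial expansion
  have hexp : (1 - auxU) ^ (n + 1) = ∑ j ∈ Finset.range (n + 2),
      PowerSeries.C (R := ℚ) ((-1 : ℚ) ^ j * ((n + 1).choose j : ℚ)) * auxU ^ j := by
    rw [sub_eq_add_neg, add_comm, add_pow]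
    refine Finset.sum_congr rfl fun j _ => ?_
    rw [neg_pow, one_pow, mul_one, map_mul, map_pow, map_neg, map_one,
      ← map_natCast (PowerSeries.C (R := ℚ)) ((n + 1).choose j)]
    ring
  have h0 : (0 : ℚ) = ∑ j ∈ Finset.range (n + 2),
      (-1 : ℚ) ^ j * ((n + 1).choose j : ℚ) * PowerSeries.coeff (R := ℚ) n (A * auxU ^ j) := by
    rw [← hkey, hexp, Finset.mul_sum, map_sum]
    refine Finset.sum_congr rfl fun j _ => ?_
    rw [show A * (PowerSeries.C (R := ℚ) ((-1 : ℚ) ^ j * ((n + 1).choose j : ℚ)) * auxU ^ j)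
        = PowerSeries.C (R := ℚ) ((-1 : ℚ) ^ j * ((n + 1).choose j : ℚ)) * (A * auxU ^ j) by ring,
      PowerSeries.coeff_C_mul]
  have hAu : ∀ j : ℕ, A * auxU ^ (j + 1) = auxU ^ j := by
    intro j
    rw [pow_succ', ← mul_assoc, hA, one_mul]
  have h1 : PowerSeries.coeff (R := ℚ) n A = ∑ j ∈ Finset.range (n + 1),
      (-1 : ℚ) ^ j * ((n + 1).choose (j + 1) : ℚ) * PowerSeries.coeff (R := ℚ) n (auxU ^ j) := by
    rw [Finset.sum_range_succ'] at h0
    have h2 : ∑ j ∈ Finset.range (n + 1),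
        (-1 : ℚ) ^ (j + 1) * ((n + 1).choose (j + 1) : ℚ)
          * PowerSeries.coeff (R := ℚ) n (A * auxU ^ (j + 1))
        = -∑ j ∈ Finset.range (n + 1),
        (-1 : ℚ) ^ j * ((n + 1).choose (j + 1) : ℚ) * PowerSeries.coeff (R := ℚ) n (auxU ^ j) := by
      rw [← Finset.sum_neg_distrib]
      refine Finset.sum_congr rfl fun j _ => ?_
      rw [hAu j]; ring
    rw [h2] at h0
    simp only [pow_zero, Nat.choose_zero_right, Nat.cast_one, one_mul, mul_one] at h0
    linarith [h0]
  -- drop the j = 0 term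
  have h3 : PowerSeries.coeff (R := ℚ) n A = ∑ j ∈ Finset.Icc 1 n,
      (-1 : ℚ) ^ j * ((n + 1).choose (j + 1) : ℚ) * PowerSeries.coeff (R := ℚ) n (auxU ^ j) := by
    rw [h1]
    symm
    apply Finset.sum_subset
    · intro x hx
      simp only [Finset.mem_Icc] at hx
      simp only [Finset.mem_range]
      omega
    · intro x hx hx'
      simp only [Finset.mem_range] at hx
      simp only [Finset.mem_Icc] at hx'
      have hx0 : x = 0 := by omega
      subst hx0
      simp [PowerSeries.coeff_one, Nat.one_le_iff_ne_zero.mp hn]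
  -- conclude
  have hnfac : (n.factorial : ℚ) ≠ 0 := Nat.cast_ne_zero.mpr n.factorial_ne_zero
  have hceq : c n = (-1 : ℚ) ^ n * (n.factorial : ℚ) * PowerSeries.coeff (R := ℚ) n A := by
    rw [hAcoeff]
    field_simp
    have hsq : (-1 : ℚ) ^ n * (-1 : ℚ) ^ n = 1 := by
      rw [← pow_add]; exact Even.neg_one_pow ⟨n, by ring⟩
    linear_combination (-c n) * hsq
  rw [hceq, h3, Finset.mul_sum, Finset.mul_sum]
  refine Finset.sum_congr rfl fun k hk => ?_
  rw [hcoeffU k]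
  have hch : ((n + k).choose n * n.factorial * k.factorial : ℚ) = ((n + k).factorial : ℚ) := by
    exact_mod_cast congrArg (Nat.cast : ℕ → ℚ)
      (by simpa using Nat.choose_mul_factorial_mul_factorial (Nat.le_add_right n k))
  have hch0 : (((n + k).choose n : ℚ)) ≠ 0 :=
    Nat.cast_ne_zero.mpr (Nat.choose_pos (Nat.le_add_right n k)).ne'
  have hnk : ((n + k).factorial : ℚ) ≠ 0 := Nat.cast_ne_zero.mpr (n + k).factorial_ne_zero
  have hkfac : (k.factorial : ℚ) ≠ 0 := Nat.cast_ne_zero.mpr k.factorial_ne_zero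
  field_simp
  rw [← hch]
  ring
end
end

section
/- Let n and m be positive integers and let λ(i) denote the sum of the base-r digits of i. If λ(n) > λ(m), then S1_C(n, m) = 0 and S2_C(n, m) = 0, where S1_C and S2_C denote the Stirling-Carlitz numbers of the first and second kind respectively. -/
open scoped Classical
open PowerSeries Finset

noncomputable section

variable (F : Type) [Field F] [Fintype F]

/-- The rational function field `K = 𝔽_r(T)`. -/
abbrev K : Type := RatFunc F

/-- `r`, the cardinality of the finite field of constants. -/
def rr : ℕ := Fintype.card F

/-- The variable `T` of the rational function field. -/
def Tv : K F := RatFunc.X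

/-- `[i] = T^{r^i} - T`. -/
def br (i : ℕ) : K F := Tv F ^ (rr F) ^ i - Tv F

/-- `D_0 = 1`, `D_i = [i] · D_{i-1}^r`. -/
def D : ℕ → K F
  | 0 => 1
  | i + 1 => br F (i + 1) * D i ^ rr F

/-- `L_0 = 1`, `L_i = [i] · L_{i-1}`. -/
def L : ℕ → K F
  | 0 => 1
  | i + 1 => br F (i + 1) * L i

/-- The Carlitz factorial `Π(n) = ∏_j D_j^{c_j}`, where `c_j = n / r^j % r` are the
base-`r` digits of `n` (all digits with index `> n` vanish since `r ≥ 2`). -/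
def Cf (n : ℕ) : K F := ∏ j ∈ Finset.range (n + 1), D F j ^ (n / (rr F) ^ j % rr F)

/-- The Carlitz logarithm `log_C(z) = Σ_{i ≥ 0} (-1)^i z^{r^i} / L_i`: the coefficient of
`z^m` is `(-1)^i / L_i` if `m = r^i` and `0` otherwise (note `i ≤ r^i = m` since `r ≥ 2`). -/
def logC : PowerSeries (K F) :=
  PowerSeries.mk fun m =>
    ∑ i ∈ Finset.range (m + 1), if m = (rr F) ^ i then (-1 : K F) ^ i / L F i else 0

/-- The Carlitz exponential `e_C(z) = Σ_{i ≥ 0} z^{r^i} / D_i`. -/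
def eC : PowerSeries (K F) :=
  PowerSeries.mk fun m =>
    ∑ i ∈ Finset.range (m + 1), if m = (rr F) ^ i then 1 / D F i else 0

/-- The power series `log_C(z)/z`. -/
def logCdivZ : PowerSeries (K F) :=
  PowerSeries.mk fun n => PowerSeries.coeff (R := K F) (n + 1) (logC F)

/-- The power series `e_C(z)/z`. -/
def eCdivZ : PowerSeries (K F) :=
  PowerSeries.mk fun n => PowerSeries.coeff (R := K F) (n + 1) (eC F)

/-- `λ(i)`, the sum of the base-`r` digits of `i`. -/
def lam (i : ℕ) : ℕ := (Nat.digits (rr F) i).sum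

section DigitLemmas

variable {b : ℕ}

lemma sum_digits_eq (hb : 2 ≤ b) (n : ℕ) :
    (Nat.digits b n).sum = n % b + (Nat.digits b (n / b)).sum := by
  rcases Nat.eq_zero_or_pos n with rfl | hn
  · simp
  · rw [Nat.digits_def' (by omega : 1 < b) hn]; simp

lemma sum_digits_mul_base (hb : 2 ≤ b) (x : ℕ) :
    (Nat.digits b (b * x)).sum = (Nat.digits b x).sum := by
  rcases Nat.eq_zero_or_pos x with rfl | hx
  · simp
  · rw [sum_digits_eq hb, Nat.mul_mod_right, Nat.mul_div_cancel_left _ (by omega : 0 < b)]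
    simp

lemma sum_digits_succ_le (hb : 2 ≤ b) (c : ℕ) :
    (Nat.digits b (c + 1)).sum ≤ (Nat.digits b c).sum + 1 := by
  induction c using Nat.strong_induction_on with
  | _ c ih =>
    have hmod : c % b < b := Nat.mod_lt _ (by omega)
    rcases eq_or_ne (c % b + 1) b with h | h
    · have hc : 0 < c := by
        rcases Nat.eq_zero_or_pos c with rfl | h'
        · simp at h; omega
        · exact h'
      have key : c + 1 = b * (c / b + 1) := by
        conv_lhs => rw [← Nat.div_add_mod c b]
        rw [Nat.mul_add, Nat.mul_one, Nat.add_assoc, h]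
      have hmod1 : (c + 1) % b = 0 := by rw [key]; exact Nat.mul_mod_right _ _

      have hdiv1 : (c + 1) / b = c / b + 1 := by
        rw [key]; exact Nat.mul_div_cancel_left _ (by omega : 0 < b)
      rw [sum_digits_eq hb (c + 1), hmod1, hdiv1]
      have h1 : (Nat.digits b (c / b + 1)).sum ≤ (Nat.digits b (c / b)).sum + 1 :=
        ih (c / b) (Nat.div_lt_self hc (by omega))
      have h2 : (Nat.digits b c).sum = c % b + (Nat.digits b (c / b)).sum := sum_digits_eq hb c
      omega
    · have key : c + 1 = b * (c / b) + (c % b + 1) := by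
        conv_lhs => rw [← Nat.div_add_mod c b]
        ring
      have hlt : c % b + 1 < b := by omega
      have hmod1 : (c + 1) % b = c % b + 1 := by
        rw [key, Nat.mul_add_mod, Nat.mod_eq_of_lt hlt]
      have hdiv1 : (c + 1) / b = c / b := by
        rw [key, Nat.mul_add_div (by omega : 0 < b), Nat.div_eq_of_lt hlt, Nat.add_zero]
      rw [sum_digits_eq hb (c + 1), hmod1, hdiv1, sum_digits_eq hb c]
      omega

lemma sum_digits_succ_of_not_dvd (hb : 2 ≤ b) (c : ℕ) (h : ¬ b ∣ (c + 1)) :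
    (Nat.digits b (c + 1)).sum = (Nat.digits b c).sum + 1 := by
  have hmod : c % b < b := Nat.mod_lt _ (by omega)
  have h' : c % b + 1 ≠ b := by
    intro hcb
    apply h
    have key : c + 1 = b * (c / b + 1) := by
      conv_lhs => rw [← Nat.div_add_mod c b]
      rw [Nat.mul_add, Nat.mul_one, Nat.add_assoc, hcb]
    exact ⟨c / b + 1, key⟩
  have key : c + 1 = b * (c / b) + (c % b + 1) := by
    conv_lhs => rw [← Nat.div_add_mod c b]
    ring
  have hlt : c % b + 1 < b := by omega
  have hmod1 : (c + 1) % b = c % b + 1 := by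
    rw [key, Nat.mul_add_mod, Nat.mod_eq_of_lt hlt]
  have hdiv1 : (c + 1) / b = c / b := by
    rw [key, Nat.mul_add_div (by omega : 0 < b), Nat.div_eq_of_lt hlt, Nat.add_zero]
  rw [sum_digits_eq hb (c + 1), hmod1, hdiv1, sum_digits_eq hb c]
  omega

lemma sum_digits_add_pow_le (hb : 2 ≤ b) :
    ∀ (i c : ℕ), (Nat.digits b (c + b ^ i)).sum ≤ (Nat.digits b c).sum + 1 := by
  intro i
  induction i with
  | zero => intro c; simpa using sum_digits_succ_le hb c
  | succ j ih =>
    intro c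
    have hmod : c % b < b := Nat.mod_lt _ (by omega)
    have key : c + b ^ (j + 1) = b * (c / b + b ^ j) + c % b := by
      conv_lhs => rw [← Nat.div_add_mod c b]
      ring
    have hmod1 : (c + b ^ (j + 1)) % b = c % b := by
      rw [key, Nat.mul_add_mod, Nat.mod_eq_of_lt hmod]
    have hdiv1 : (c + b ^ (j + 1)) / b = c / b + b ^ j := by
      rw [key, Nat.mul_add_div (by omega : 0 < b), Nat.div_eq_of_lt hmod, Nat.add_zero]
    rw [sum_digits_eq hb (c + b ^ (j + 1)), hmod1, hdiv1, sum_digits_eq hb c]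
    have := ih (c / b)
    omega

end DigitLemmas

section PowerSeriesLemmas

variable {R : Type*} [CommRing R]

lemma coeff_mul_congr {a b c d : PowerSeries R} {n : ℕ}
    (hab : ∀ k ≤ n, PowerSeries.coeff (R := R) k a = PowerSeries.coeff (R := R) k b)
    (hcd : ∀ k ≤ n, PowerSeries.coeff (R := R) k c = PowerSeries.coeff (R := R) k d) :
    ∀ k ≤ n, PowerSeries.coeff (R := R) k (a * c) = PowerSeries.coeff (R := R) k (b * d) := by
  intro k hk
  rw [PowerSeries.coeff_mul, PowerSeries.coeff_mul]
  apply Finset.sum_congr rfl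
  rintro ⟨i, j⟩ hij
  simp only [Finset.HasAntidiagonal.mem_antidiagonal] at hij
  rw [hab i (by omega), hcd j (by omega)]

lemma coeff_pow_congr {a b : PowerSeries R} {n : ℕ}
    (hab : ∀ k ≤ n, PowerSeries.coeff (R := R) k a = PowerSeries.coeff (R := R) k b) (m : ℕ) :
    ∀ k ≤ n, PowerSeries.coeff (R := R) k (a ^ m) = PowerSeries.coeff (R := R) k (b ^ m) := by
  induction m with
  | zero => simp
  | succ m ih =>
    intro k hk
    rw [pow_succ, pow_succ]
    exact coeff_mul_congr ih hab k hk

lemma coeff_pow_prime_pow (p : ℕ) [Fact p.Prime] [CharP R p] (e : ℕ)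
    (g : PowerSeries R) (n : ℕ) :
    PowerSeries.coeff (R := R) n (g ^ p ^ e) =
      if p ^ e ∣ n then (PowerSeries.coeff (R := R) (n / p ^ e) g) ^ p ^ e else 0 := by
  have hp : p.Prime := Fact.out
  have hq : 0 < p ^ e := pow_pos hp.pos e
  set t := PowerSeries.trunc (n + 1) g with ht
  have hagree : ∀ k ≤ n, PowerSeries.coeff (R := R) k (t : PowerSeries R) = PowerSeries.coeff (R := R) k g := by
    intro k hk
    rw [Polynomial.coeff_coe, PowerSeries.coeff_trunc]
    simp [Nat.lt_succ_of_le hk]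
  have h1 : PowerSeries.coeff (R := R) n (g ^ p ^ e) =
      PowerSeries.coeff (R := R) n ((t : PowerSeries R) ^ p ^ e) :=
    (coeff_pow_congr hagree (p ^ e) n le_rfl).symm
  have hfrob : ∀ x : R, (frobenius R p ^ e) x = x ^ p ^ e := by
    intro x
    rw [← iterate_frobenius]
    exact congrFun (hom_coe_pow _ rfl (fun f g => rfl) (frobenius R p) e) x
  rw [h1, ← Polynomial.coe_pow, Polynomial.coeff_coe,
    ← Polynomial.map_iterateFrobenius_expand, Polynomial.coeff_map, Polynomial.coeff_expand hq,
    apply_ite (iterateFrobenius R p e), map_zero, iterateFrobenius_def]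
  by_cases hd : p ^ e ∣ n
  · rw [if_pos hd, if_pos hd, ← Polynomial.coeff_coe, hagree (n / p ^ e) (Nat.div_le_self _ _)]
  · rw [if_neg hd, if_neg hd]

/-- Main lemma: if `f` is supported on powers of `b = p ^ e`, then nonvanishing of
`coeff n (f ^ m)` forces the digit sum of `n` to be at most that of `m`. -/
lemma key_lemma (p : ℕ) [Fact p.Prime] [CharP R p] (e : ℕ) (b : ℕ) (hbe : b = p ^ e)
    (hb : 2 ≤ b) (f : PowerSeries R)
    (hf : ∀ k, PowerSeries.coeff (R := R) k f ≠ 0 → ∃ i, k = b ^ i) :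
    ∀ m n, PowerSeries.coeff (R := R) n (f ^ m) ≠ 0 →
      (Nat.digits b n).sum ≤ (Nat.digits b m).sum := by
  subst hbe
  intro m
  induction m using Nat.strong_induction_on with
  | _ m ih =>
    intro n hne
    rcases Nat.eq_zero_or_pos m with rfl | hm
    · rcases Nat.eq_zero_or_pos n with rfl | hn
      · simp
      · exfalso
        apply hne
        rw [pow_zero, PowerSeries.coeff_one, if_neg (by omega)]
    by_cases hdvd : p ^ e ∣ m
    · obtain ⟨m', rfl⟩ := hdvd
      have hq : 0 < p ^ e := by omega
      have hm' : 0 < m' := by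
        rcases Nat.eq_zero_or_pos m' with rfl | h
        · simp at hm
        · exact h
      rw [mul_comm, pow_mul, coeff_pow_prime_pow p e] at hne
      split_ifs at hne with hd
      · have hy : PowerSeries.coeff (R := R) (n / p ^ e) (f ^ m') ≠ 0 := by
          intro h0
          rw [h0] at hne
          exact hne (zero_pow hq.ne')
        have h1 := ih m' (by nlinarith) _ hy
        obtain ⟨k, rfl⟩ := hd
        rw [Nat.mul_div_cancel_left _ hq] at h1
        rw [sum_digits_mul_base hb k, sum_digits_mul_base hb m']
        exact h1
      · exact absurd rfl hne
    · obtain ⟨m', rfl⟩ : ∃ m', m = m' + 1 := ⟨m - 1, by omega⟩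
      rw [pow_succ', PowerSeries.coeff_mul] at hne
      obtain ⟨⟨x, y⟩, hxy, hterm⟩ := Finset.exists_ne_zero_of_sum_ne_zero hne
      simp only [Finset.HasAntidiagonal.mem_antidiagonal] at hxy
      have hx : PowerSeries.coeff (R := R) x f ≠ 0 := fun h => hterm (by rw [h, zero_mul])
      have hy : PowerSeries.coeff (R := R) y (f ^ m') ≠ 0 := fun h => hterm (by rw [h, mul_zero])
      obtain ⟨i, rfl⟩ := hf x hx
      have h1 := ih m' (by omega) y hy
      have h2 : (Nat.digits (p ^ e) n).sum ≤ (Nat.digits (p ^ e) y).sum + 1 := by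
        rw [← hxy, Nat.add_comm]
        exact sum_digits_add_pow_le hb i y
      rw [sum_digits_succ_of_not_dvd hb m' hdvd]
      omega

end PowerSeriesLemmas

lemma rr_ge_two : 2 ≤ rr F := Fintype.one_lt_card

lemma br_ne_zero (i : ℕ) (hi : 1 ≤ i) : br F i ≠ 0 := by
  have h2 : 2 ≤ rr F ^ i :=
    le_trans (rr_ge_two F) (Nat.le_self_pow (by omega) _)
  intro h
  rw [br, sub_eq_zero, Tv] at h
  have hX : (Polynomial.X : Polynomial F) ^ (rr F ^ i) = Polynomial.X := by
    apply RatFunc.algebraMap_injective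
    rw [map_pow, RatFunc.algebraMap_X, h]
  have h1 : ((Polynomial.X : Polynomial F) ^ (rr F ^ i)).coeff (rr F ^ i) =
      (Polynomial.X : Polynomial F).coeff (rr F ^ i) := by rw [hX]
  rw [Polynomial.coeff_X_pow, if_pos rfl, Polynomial.coeff_X,
    if_neg (by omega : ¬ 1 = rr F ^ i)] at h1
  exact one_ne_zero h1

lemma D_ne_zero : ∀ i, D F i ≠ 0
  | 0 => one_ne_zero
  | i + 1 => by
    rw [D]
    exact mul_ne_zero (br_ne_zero F _ (by omega)) (pow_ne_zero _ (D_ne_zero i))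

lemma Cf_ne_zero (n : ℕ) : Cf F n ≠ 0 :=
  Finset.prod_ne_zero_iff.mpr fun j _ => pow_ne_zero _ (D_ne_zero F j)

lemma logC_support (k : ℕ) (h : PowerSeries.coeff (R := K F) k (logC F) ≠ 0) :
    ∃ i, k = rr F ^ i := by
  by_contra hc
  push_neg at hc
  exact h (by rw [logC, coeff_mk]; exact Finset.sum_eq_zero fun i _ => if_neg (hc i))

lemma eC_support (k : ℕ) (h : PowerSeries.coeff (R := K F) k (eC F) ≠ 0) :
    ∃ i, k = rr F ^ i := by
  by_contra hc
  push_neg at hc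
  exact h (by rw [eC, coeff_mk]; exact Finset.sum_eq_zero fun i _ => if_neg (hc i))

/-- Proposition: if `n, m ≥ 1` and `λ(n) > λ(m)`, then `S1_C(n, m) = S2_C(n, m) = 0`. -/
theorem stirlingCarlitz_eq_zero_of_digitSum_lt
    (S1C S2C : ℕ → ℕ → K F)
    (hS1C : ∀ n k : ℕ,
      PowerSeries.coeff (R := K F) n (logC F ^ k) / Cf F k = S1C n k / Cf F n)
    (hS2C : ∀ n k : ℕ,
      PowerSeries.coeff (R := K F) n (eC F ^ k) / Cf F k = S2C n k / Cf F n)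
    (n m : ℕ) (hn : 1 ≤ n) (hm : 1 ≤ m) (hlam : lam F m < lam F n) :
    S1C n m = 0 ∧ S2C n m = 0 := by
  have hb2 : 2 ≤ rr F := rr_ge_two F
  set p := ringChar F with hpdef
  haveI : CharP F p := ringChar.charP F
  obtain ⟨e, hp, hcard⟩ := FiniteField.card F p
  haveI : Fact p.Prime := ⟨hp⟩
  haveI : CharP (K F) p := charP_of_injective_ringHom
    (f := ((algebraMap (Polynomial F) (RatFunc F)).comp Polynomial.C))
    ((RatFunc.algebraMap_injective F).comp Polynomial.C_injective) p
  have hbe : rr F = p ^ (e : ℕ) := hcard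
  have key1 := key_lemma (R := K F) p (e : ℕ) (rr F) hbe hb2 (logC F) (logC_support F)
  have key2 := key_lemma (R := K F) p (e : ℕ) (rr F) hbe hb2 (eC F) (eC_support F)
  have hcoeff1 : PowerSeries.coeff (R := K F) n (logC F ^ m) = 0 := by
    by_contra hc
    have := key1 m n hc
    simp only [lam] at hlam
    omega
  have hcoeff2 : PowerSeries.coeff (R := K F) n (eC F ^ m) = 0 := by
    by_contra hc
    have := key2 m n hc
    simp only [lam] at hlam
    omega
  constructor
  · have e1 := hS1C n m
    rw [hcoeff1, zero_div] at e1
    exact (div_eq_zero_iff.mp e1.symm).resolve_right (Cf_ne_zero F n)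
  · have e2 := hS2C n m
    rw [hcoeff2, zero_div] at e2
    exact (div_eq_zero_iff.mp e2.symm).resolve_right (Cf_ne_zero F n)
end
end
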